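/- If t is a positive integer with t ≡ 0 (mod 18), then a₃(t) = (2t² − 32t + 144)/9. -/

import Mathlib

/-- A 3×3 magic square with magic sum `t`: pairwise distinct positive integer entries,
all row sums, column sums, and both main diagonal sums equal to `t`. -/
def IsMagicSquare3 (t : ℕ) (M : Matrix (Fin 3) (Fin 3) ℕ) : Prop :=
  (∀ i j, 0 < M i j) ∧
  (Function.Injective fun p : Fin 3 × Fin 3 => M p.1 p.2) ∧
  (∀ i, ∑ j, M i j = t) ∧
  (∀ j, ∑ i, M i j = t) ∧
  M 0 0 + M 1 1 + M 2 2 = t ∧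
  M 0 2 + M 1 1 + M 2 0 = t

/-- The number of 3×3 magic squares with magic sum `t`. -/
noncomputable def a3 (t : ℕ) : ℕ := Set.ncard {M : Matrix (Fin 3) (Fin 3) ℕ | IsMagicSquare3 t M}

section MagicAux
open Finset
set_option maxHeartbeats 2000000

def entOff (a b : ℤ) : Fin 3 → Fin 3 → ℤ := fun i j =>
  match i.1, j.1 with
  | 0, 0 => a | 0, 1 => -a-b | 0, 2 => b
  | 1, 0 => -a+b | 1, 1 => 0 | 1, 2 => a-b
  | 2, 0 => -b | 2, 1 => a+b | _, _ => -a

def mkM (c a b : ℤ) : Matrix (Fin 3) (Fin 3) ℕ := fun i j => (c + entOff a b i j).toNat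

noncomputable def sqr (n : ℤ) : Finset (ℤ × ℤ) := Finset.Icc (-n) n ×ˢ Finset.Icc (-n) n

noncomputable def diamond (n : ℤ) : Finset (ℤ × ℤ) :=
  (sqr n).filter (fun p => p.1 + p.2 ≤ n ∧ p.1 - p.2 ≤ n ∧ -p.1 + p.2 ≤ n ∧ -p.1 - p.2 ≤ n)

lemma sumAbs (N : ℕ) : ∑ a ∈ Finset.Icc (-(N:ℤ)) N, (a.natAbs : ℤ) = N*(N+1) := by
  induction N with
  | zero => simp
  | succ N ih =>
    have hins : Finset.Icc (-(N+1:ℕ):ℤ) ((N+1:ℕ):ℤ)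
        = insert (-(N+1:ℕ):ℤ) (insert ((N+1:ℕ):ℤ) (Finset.Icc (-(N:ℕ):ℤ) (N:ℤ))) := by
      ext x; simp only [Finset.mem_Icc, Finset.mem_insert]; push_cast; omega
    have h1 : (-(N+1:ℕ):ℤ) ∉ insert ((N+1:ℕ):ℤ) (Finset.Icc (-(N:ℕ):ℤ) (N:ℤ)) := by
      simp only [Finset.mem_insert, Finset.mem_Icc]; push_cast; omega
    have h2 : ((N+1:ℕ):ℤ) ∉ Finset.Icc (-(N:ℕ):ℤ) (N:ℤ) := by
      simp only [Finset.mem_Icc]; push_cast; omega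
    rw [hins, Finset.sum_insert h1, Finset.sum_insert h2, ih]
    have e1 : ((-(N+1:ℕ):ℤ).natAbs : ℤ) = (N:ℤ)+1 := by omega
    have e2 : ((((N+1:ℕ):ℤ)).natAbs : ℤ) = (N:ℤ)+1 := by omega
    rw [e1, e2]; push_cast; ring

lemma sumAbs' (n : ℤ) (hn : 0 ≤ n) : ∑ a ∈ Finset.Icc (-n) n, (a.natAbs : ℤ) = n*(n+1) := by
  lift n to ℕ using hn
  exact sumAbs n

lemma fiberCard (n a : ℤ) :
    ((diamond n).filter (fun p => p.1 = a)).card = (2*(n - a.natAbs) + 1).toNat := by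
  have himg : (diamond n).filter (fun p => p.1 = a)
      = (Finset.Icc (-(n - a.natAbs)) (n - a.natAbs)).image (fun b => (a, b)) := by
    ext ⟨x, y⟩
    simp only [diamond, sqr, Finset.mem_filter, Finset.mem_product, Finset.mem_Icc,
      Finset.mem_image, Prod.mk.injEq]
    constructor
    · rintro ⟨⟨⟨hx, hy⟩, h1, h2, h3, h4⟩, rfl⟩
      exact ⟨y, by omega, rfl, rfl⟩
    · rintro ⟨b, hb, rfl, rfl⟩
      refine ⟨⟨⟨?_, ?_⟩, ?_, ?_, ?_, ?_⟩, rfl⟩ <;> omega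
  rw [himg, Finset.card_image_of_injective _ (fun u v h => (Prod.mk.injEq _ _ _ _).mp h |>.2),
    Int.card_Icc]
  omega

lemma diamondCard (n : ℤ) (hn : 0 ≤ n) : ((diamond n).card : ℤ) = 2*n^2 + 2*n + 1 := by
  have h := Finset.card_eq_sum_card_fiberwise (f := Prod.fst) (s := diamond n)
    (t := Finset.Icc (-n) n) (by
      rintro ⟨x, y⟩ hx
      change (x, y) ∈ diamond n at hx
      simp only [diamond, sqr, Finset.mem_filter, Finset.mem_product, Finset.mem_Icc] at hx
      exact Finset.mem_Icc.mpr ⟨hx.1.1.1, hx.1.1.2⟩)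
  simp only [fiberCard] at h
  rw [h, Nat.cast_sum]
  have hcong : ∀ a ∈ Finset.Icc (-n) n,
      ((2*(n - a.natAbs) + 1).toNat : ℤ) = (2*n+1) - 2*(a.natAbs : ℤ) := by
    intro a ha
    simp only [Finset.mem_Icc] at ha
    omega
  rw [Finset.sum_congr rfl hcong, Finset.sum_sub_distrib, Finset.sum_const, Int.card_Icc,
    ← Finset.mul_sum, sumAbs' n hn]
  have h2 : (n + 1 - -n).toNat • (2*n+1) = ((n + 1 - -n).toNat : ℤ) * (2*n+1) := by
    simp [nsmul_eq_mul]
  rw [h2]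
  have h3 : ((n + 1 - -n).toNat : ℤ) = 2*n+1 := by omega
  rw [h3]; ring

noncomputable def lineSeg (m u v : ℤ) : Finset (ℤ × ℤ) :=
  (Finset.Icc (-m) m \ {0}).image (fun x => (u*x, v*x))

lemma mem_lineSeg (m u v : ℤ) (p : ℤ × ℤ) :
    p ∈ lineSeg m u v ↔ ∃ w : ℤ, -m ≤ w ∧ w ≤ m ∧ w ≠ 0 ∧ u*w = p.1 ∧ v*w = p.2 := by
  obtain ⟨x, y⟩ := p
  simp only [lineSeg, Finset.mem_image, Finset.mem_sdiff, Finset.mem_Icc, Finset.mem_singleton,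
    Prod.mk.injEq]
  constructor
  · rintro ⟨w, ⟨⟨h1, h2⟩, h3⟩, h4, h5⟩
    exact ⟨w, h1, h2, h3, h4, h5⟩
  · rintro ⟨w, h1, h2, h3, h4, h5⟩
    exact ⟨w, ⟨⟨h1, h2⟩, h3⟩, h4, h5⟩

lemma lineSegCard (m u v : ℤ) (hm : 0 ≤ m) (huv : u ≠ 0 ∨ v ≠ 0) :
    ((lineSeg m u v).card : ℤ) = 2*m := by
  have hinj : Function.Injective (fun x : ℤ => (u*x, v*x)) := by
    intro x y h
    rw [Prod.mk.injEq] at h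
    rcases huv with hu | hv
    · exact mul_left_cancel₀ hu h.1
    · exact mul_left_cancel₀ hv h.2
  rw [lineSeg, Finset.card_image_of_injective _ hinj,
    Finset.card_sdiff_of_subset (by simp; omega), Int.card_Icc]
  simp
  omega

noncomputable def badSet (n : ℤ) : Finset (ℤ × ℤ) :=
  (diamond n).filter (fun p => p.1 = 0 ∨ p.2 = 0 ∨ p.1 = p.2 ∨ p.1 = -p.2 ∨
    p.2 = 2*p.1 ∨ p.2 = -2*p.1 ∨ p.1 = 2*p.2 ∨ p.1 = -2*p.2)

noncomputable def goodSet (n : ℤ) : Finset (ℤ × ℤ) :=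
  (diamond n).filter (fun p => ¬(p.1 = 0 ∨ p.2 = 0 ∨ p.1 = p.2 ∨ p.1 = -p.2 ∨
    p.2 = 2*p.1 ∨ p.2 = -2*p.1 ∨ p.1 = 2*p.2 ∨ p.1 = -2*p.2))

lemma badDecomp (k : ℕ) (hk : 1 ≤ k) :
    badSet (6*(k:ℤ)-1) = insert ((0:ℤ),(0:ℤ))
      (lineSeg (6*(k:ℤ)-1) 0 1 ∪ lineSeg (6*(k:ℤ)-1) 1 0 ∪ lineSeg (3*(k:ℤ)-1) 1 1 ∪
       lineSeg (3*(k:ℤ)-1) 1 (-1) ∪ lineSeg (2*(k:ℤ)-1) 1 2 ∪ lineSeg (2*(k:ℤ)-1) 1 (-2) ∪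
       lineSeg (2*(k:ℤ)-1) 2 1 ∪ lineSeg (2*(k:ℤ)-1) (-2) 1) := by
  ext ⟨x, y⟩
  simp only [badSet, diamond, sqr, Finset.mem_filter, Finset.mem_product, Finset.mem_Icc,
    Finset.mem_insert, Finset.mem_union, mem_lineSeg, Prod.mk.injEq]
  constructor
  · rintro ⟨⟨⟨⟨hx1, hx2⟩, hy1, hy2⟩, h1, h2, h3, h4⟩, hbad⟩
    by_cases hx0 : x = 0
    · by_cases hy0 : y = 0
      · exact Or.inl ⟨hx0, hy0⟩
      · refine Or.inr ?_
        have : ∃ w : ℤ, -(6*(k:ℤ)-1) ≤ w ∧ w ≤ 6*(k:ℤ)-1 ∧ w ≠ 0 ∧ 0*w = x ∧ 1*w = y :=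
          ⟨y, by omega⟩
        exact (Or.inl (Or.inl (Or.inl (Or.inl (Or.inl (Or.inl (Or.inl this)))))))
    · by_cases hy0 : y = 0
      · refine Or.inr ?_
        have : ∃ w : ℤ, -(6*(k:ℤ)-1) ≤ w ∧ w ≤ 6*(k:ℤ)-1 ∧ w ≠ 0 ∧ 1*w = x ∧ 0*w = y :=
          ⟨x, by omega⟩
        exact (Or.inl (Or.inl (Or.inl (Or.inl (Or.inl (Or.inl (Or.inr this)))))))
      · refine Or.inr ?_
        rcases hbad with h | h | h | h | h | h | h | h
        · exact absurd h hx0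
        · exact absurd h hy0
        · have : ∃ w : ℤ, -(3*(k:ℤ)-1) ≤ w ∧ w ≤ 3*(k:ℤ)-1 ∧ w ≠ 0 ∧ 1*w = x ∧ 1*w = y :=
            ⟨x, by omega⟩
          exact (Or.inl (Or.inl (Or.inl (Or.inl (Or.inl (Or.inr this))))))
        · have : ∃ w : ℤ, -(3*(k:ℤ)-1) ≤ w ∧ w ≤ 3*(k:ℤ)-1 ∧ w ≠ 0 ∧ 1*w = x ∧ (-1)*w = y :=
            ⟨x, by omega⟩
          exact (Or.inl (Or.inl (Or.inl (Or.inl (Or.inr this)))))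
        · have : ∃ w : ℤ, -(2*(k:ℤ)-1) ≤ w ∧ w ≤ 2*(k:ℤ)-1 ∧ w ≠ 0 ∧ 1*w = x ∧ 2*w = y :=
            ⟨x, by omega⟩
          exact (Or.inl (Or.inl (Or.inl (Or.inr this))))
        · have : ∃ w : ℤ, -(2*(k:ℤ)-1) ≤ w ∧ w ≤ 2*(k:ℤ)-1 ∧ w ≠ 0 ∧ 1*w = x ∧ (-2)*w = y :=
            ⟨x, by omega⟩
          exact (Or.inl (Or.inl (Or.inr this)))
        · have : ∃ w : ℤ, -(2*(k:ℤ)-1) ≤ w ∧ w ≤ 2*(k:ℤ)-1 ∧ w ≠ 0 ∧ 2*w = x ∧ 1*w = y :=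
            ⟨y, by omega⟩
          exact (Or.inl (Or.inr this))
        · have : ∃ w : ℤ, -(2*(k:ℤ)-1) ≤ w ∧ w ≤ 2*(k:ℤ)-1 ∧ w ≠ 0 ∧ (-2)*w = x ∧ 1*w = y :=
            ⟨y, by omega⟩
          exact (Or.inr this)
  · rintro (⟨rfl, rfl⟩ | ((((((((⟨w,hw⟩ | ⟨w,hw⟩) | ⟨w,hw⟩) | ⟨w,hw⟩) | ⟨w,hw⟩) | ⟨w,hw⟩) |
      ⟨w,hw⟩) | ⟨w,hw⟩))) <;>
    refine ⟨⟨⟨⟨?_, ?_⟩, ?_, ?_⟩, ?_, ?_, ?_, ?_⟩, ?_⟩ <;> omega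

lemma goodCard (k : ℕ) (hk : 1 ≤ k) :
    ((goodSet (6*(k:ℤ)-1)).card : ℤ) = 72*(k:ℤ)^2 - 64*(k:ℤ) + 16 := by
  set n : ℤ := 6*(k:ℤ)-1 with hn
  have hsplit : (badSet n).card + (goodSet n).card = (diamond n).card :=
    Finset.card_filter_add_card_filter_not _
  -- the union
  have d2 : Disjoint (lineSeg n 0 1) (lineSeg n 1 0) := by
    rw [Finset.disjoint_left]; rintro p hp hq
    rw [mem_lineSeg] at hp hq
    obtain ⟨w, hw⟩ := hp; obtain ⟨w', hw'⟩ := hq; omega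
  have d3 : Disjoint ((lineSeg n 0 1) ∪ (lineSeg n 1 0)) (lineSeg (3*(k:ℤ)-1) 1 1) := by
    rw [Finset.disjoint_left]; rintro p hp hq
    simp only [Finset.mem_union, mem_lineSeg] at hp
    rw [mem_lineSeg] at hq
    obtain ⟨w', hw'⟩ := hq
    rcases hp with ⟨w, hw⟩ | ⟨w, hw⟩ <;> omega
  have d4 : Disjoint ((lineSeg n 0 1) ∪ (lineSeg n 1 0) ∪ (lineSeg (3*(k:ℤ)-1) 1 1)) (lineSeg (3*(k:ℤ)-1) 1 (-1)) := by
    rw [Finset.disjoint_left]; rintro p hp hq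
    simp only [Finset.mem_union, mem_lineSeg] at hp
    rw [mem_lineSeg] at hq
    obtain ⟨w', hw'⟩ := hq
    rcases hp with (⟨w, hw⟩ | ⟨w, hw⟩) | ⟨w, hw⟩ <;> omega
  have d5 : Disjoint ((lineSeg n 0 1) ∪ (lineSeg n 1 0) ∪ (lineSeg (3*(k:ℤ)-1) 1 1) ∪ (lineSeg (3*(k:ℤ)-1) 1 (-1))) (lineSeg (2*(k:ℤ)-1) 1 2) := by
    rw [Finset.disjoint_left]; rintro p hp hq
    simp only [Finset.mem_union, mem_lineSeg] at hp
    rw [mem_lineSeg] at hq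
    obtain ⟨w', hw'⟩ := hq
    rcases hp with ((⟨w, hw⟩ | ⟨w, hw⟩) | ⟨w, hw⟩) | ⟨w, hw⟩ <;> omega
  have d6 : Disjoint ((lineSeg n 0 1) ∪ (lineSeg n 1 0) ∪ (lineSeg (3*(k:ℤ)-1) 1 1) ∪ (lineSeg (3*(k:ℤ)-1) 1 (-1)) ∪ (lineSeg (2*(k:ℤ)-1) 1 2)) (lineSeg (2*(k:ℤ)-1) 1 (-2)) := by
    rw [Finset.disjoint_left]; rintro p hp hq
    simp only [Finset.mem_union, mem_lineSeg] at hp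
    rw [mem_lineSeg] at hq
    obtain ⟨w', hw'⟩ := hq
    rcases hp with (((⟨w, hw⟩ | ⟨w, hw⟩) | ⟨w, hw⟩) | ⟨w, hw⟩) | ⟨w, hw⟩ <;> omega
  have d7 : Disjoint ((lineSeg n 0 1) ∪ (lineSeg n 1 0) ∪ (lineSeg (3*(k:ℤ)-1) 1 1) ∪ (lineSeg (3*(k:ℤ)-1) 1 (-1)) ∪ (lineSeg (2*(k:ℤ)-1) 1 2) ∪ (lineSeg (2*(k:ℤ)-1) 1 (-2))) (lineSeg (2*(k:ℤ)-1) 2 1) := by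
    rw [Finset.disjoint_left]; rintro p hp hq
    simp only [Finset.mem_union, mem_lineSeg] at hp
    rw [mem_lineSeg] at hq
    obtain ⟨w', hw'⟩ := hq
    rcases hp with ((((⟨w, hw⟩ | ⟨w, hw⟩) | ⟨w, hw⟩) | ⟨w, hw⟩) | ⟨w, hw⟩) | ⟨w, hw⟩ <;> omega
  have d8 : Disjoint ((lineSeg n 0 1) ∪ (lineSeg n 1 0) ∪ (lineSeg (3*(k:ℤ)-1) 1 1) ∪ (lineSeg (3*(k:ℤ)-1) 1 (-1)) ∪ (lineSeg (2*(k:ℤ)-1) 1 2) ∪ (lineSeg (2*(k:ℤ)-1) 1 (-2)) ∪ (lineSeg (2*(k:ℤ)-1) 2 1)) (lineSeg (2*(k:ℤ)-1) (-2) 1) := by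
    rw [Finset.disjoint_left]; rintro p hp hq
    simp only [Finset.mem_union, mem_lineSeg] at hp
    rw [mem_lineSeg] at hq
    obtain ⟨w', hw'⟩ := hq
    rcases hp with (((((⟨w, hw⟩ | ⟨w, hw⟩) | ⟨w, hw⟩) | ⟨w, hw⟩) | ⟨w, hw⟩) | ⟨w, hw⟩) | ⟨w, hw⟩ <;>
      omega
  have hUcard : ((lineSeg n 0 1) ∪ (lineSeg n 1 0) ∪ (lineSeg (3*(k:ℤ)-1) 1 1) ∪ (lineSeg (3*(k:ℤ)-1) 1 (-1)) ∪ (lineSeg (2*(k:ℤ)-1) 1 2) ∪ (lineSeg (2*(k:ℤ)-1) 1 (-2)) ∪ (lineSeg (2*(k:ℤ)-1) 2 1) ∪ (lineSeg (2*(k:ℤ)-1) (-2) 1)).card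
      = (lineSeg n 0 1).card + (lineSeg n 1 0).card + (lineSeg (3*(k:ℤ)-1) 1 1).card + (lineSeg (3*(k:ℤ)-1) 1 (-1)).card + (lineSeg (2*(k:ℤ)-1) 1 2).card + (lineSeg (2*(k:ℤ)-1) 1 (-2)).card + (lineSeg (2*(k:ℤ)-1) 2 1).card + (lineSeg (2*(k:ℤ)-1) (-2) 1).card := by
    rw [Finset.card_union_of_disjoint d8, Finset.card_union_of_disjoint d7,
      Finset.card_union_of_disjoint d6, Finset.card_union_of_disjoint d5,
      Finset.card_union_of_disjoint d4, Finset.card_union_of_disjoint d3,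
      Finset.card_union_of_disjoint d2]
  have h0 : ((0:ℤ),(0:ℤ)) ∉ (lineSeg n 0 1) ∪ (lineSeg n 1 0) ∪ (lineSeg (3*(k:ℤ)-1) 1 1) ∪ (lineSeg (3*(k:ℤ)-1) 1 (-1)) ∪ (lineSeg (2*(k:ℤ)-1) 1 2) ∪ (lineSeg (2*(k:ℤ)-1) 1 (-2)) ∪ (lineSeg (2*(k:ℤ)-1) 2 1) ∪ (lineSeg (2*(k:ℤ)-1) (-2) 1) := by
    intro h
    simp only [Finset.mem_union, mem_lineSeg] at h
    rcases h with ((((((⟨w, hw⟩ | ⟨w, hw⟩) | ⟨w, hw⟩) | ⟨w, hw⟩) | ⟨w, hw⟩) | ⟨w, hw⟩) | ⟨w, hw⟩) |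
      ⟨w, hw⟩ <;> omega
  have hbadcard : ((badSet n).card : ℤ) = 52*(k:ℤ) - 15 := by
    rw [badDecomp k hk, Finset.card_insert_of_notMem h0, hUcard]
    push_cast
    rw [lineSegCard _ _ _ (by omega) (by omega), lineSegCard _ _ _ (by omega) (by omega),
      lineSegCard _ _ _ (by omega) (by omega), lineSegCard _ _ _ (by omega) (by omega),
      lineSegCard _ _ _ (by omega) (by omega), lineSegCard _ _ _ (by omega) (by omega),
      lineSegCard _ _ _ (by omega) (by omega), lineSegCard _ _ _ (by omega) (by omega)]
    ring
  have hdia : ((diamond n).card : ℤ) = 2*n^2 + 2*n + 1 := diamondCard n (by omega)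
  have : ((goodSet n).card : ℤ) = (2*n^2 + 2*n + 1) - (52*(k:ℤ) - 15) := by
    have := hsplit
    push_cast at *
    linarith
  rw [this, hn]; ring

lemma mem_goodSet (n : ℤ) (a b : ℤ) :
    (a, b) ∈ goodSet n ↔ (-n ≤ a ∧ a ≤ n ∧ -n ≤ b ∧ b ≤ n ∧
      a + b ≤ n ∧ a - b ≤ n ∧ -a + b ≤ n ∧ -a - b ≤ n ∧
      a ≠ 0 ∧ b ≠ 0 ∧ a ≠ b ∧ a ≠ -b ∧ b ≠ 2*a ∧ b ≠ -2*a ∧ a ≠ 2*b ∧ a ≠ -2*b) := by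
  simp only [goodSet, diamond, sqr, Finset.mem_filter, Finset.mem_product, Finset.mem_Icc]
  push_neg
  tauto

lemma mk_magic (k : ℕ) (hk : 1 ≤ k) (a b : ℤ) (hmem : (a, b) ∈ goodSet (6*(k:ℤ)-1)) :
    IsMagicSquare3 (18*k) (mkM (6*(k:ℤ)) a b) := by
  rw [mem_goodSet] at hmem
  obtain ⟨h1, h2, h3, h4, h5, h6, h7, h8, n1, n2, n3, n4, n5, n6, n7, n8⟩ := hmem
  refine ⟨?_, ?_, ?_, ?_, ?_, ?_⟩
  · intro i j
    fin_cases i <;> fin_cases j <;> simp [mkM, entOff] <;> omega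
  · intro p q hpq
    simp only at hpq
    fin_cases p <;> fin_cases q <;>
      first
        | rfl
        | (exfalso; simp only [mkM, entOff] at hpq; omega)
  · intro i
    fin_cases i <;> simp [Fin.sum_univ_three, mkM, entOff] <;> omega
  · intro j
    fin_cases j <;> simp [Fin.sum_univ_three, mkM, entOff] <;> omega
  · simp [mkM, entOff]; omega
  · simp [mkM, entOff]; omega

lemma magic_mk (k : ℕ) (hk : 1 ≤ k) (M : Matrix (Fin 3) (Fin 3) ℕ)
    (hM : IsMagicSquare3 (18*k) M) :
    ∃ a b : ℤ, (a, b) ∈ goodSet (6*(k:ℤ)-1) ∧ M = mkM (6*(k:ℤ)) a b := by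
  obtain ⟨hpos, hinj, hrow, hcol, hd1, hd2⟩ := hM
  have r0 := hrow 0; have r1 := hrow 1; have r2 := hrow 2
  have c0 := hcol 0; have c1 := hcol 1; have c2 := hcol 2
  simp only [Fin.sum_univ_three] at r0 r1 r2 c0 c1 c2
  have p00 := hpos 0 0; have p01 := hpos 0 1; have p02 := hpos 0 2
  have p10 := hpos 1 0; have p11 := hpos 1 1; have p12 := hpos 1 2
  have p20 := hpos 2 0; have p21 := hpos 2 1; have p22 := hpos 2 2
  have ne1 : M 0 0 ≠ M 1 1 := fun h => absurd (hinj (a₁ := (0,0)) (a₂ := (1,1)) h) (by decide)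
  have ne2 : M 0 2 ≠ M 1 1 := fun h => absurd (hinj (a₁ := (0,2)) (a₂ := (1,1)) h) (by decide)
  have ne3 : M 0 0 ≠ M 0 2 := fun h => absurd (hinj (a₁ := (0,0)) (a₂ := (0,2)) h) (by decide)
  have ne4 : M 0 0 ≠ M 2 0 := fun h => absurd (hinj (a₁ := (0,0)) (a₂ := (2,0)) h) (by decide)
  have ne5 : M 0 0 ≠ M 1 0 := fun h => absurd (hinj (a₁ := (0,0)) (a₂ := (1,0)) h) (by decide)
  have ne6 : M 2 2 ≠ M 2 1 := fun h => absurd (hinj (a₁ := (2,2)) (a₂ := (2,1)) h) (by decide)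
  have ne7 : M 0 2 ≠ M 1 2 := fun h => absurd (hinj (a₁ := (0,2)) (a₂ := (1,2)) h) (by decide)
  have ne8 : M 2 0 ≠ M 2 1 := fun h => absurd (hinj (a₁ := (2,0)) (a₂ := (2,1)) h) (by decide)
  set a : ℤ := (M 0 0 : ℤ) - 6*(k:ℤ) with ha
  set b : ℤ := (M 0 2 : ℤ) - 6*(k:ℤ) with hb
  refine ⟨a, b, ?_, ?_⟩
  · rw [mem_goodSet]
    refine ⟨?_, ?_, ?_, ?_, ?_, ?_, ?_, ?_, ?_, ?_, ?_, ?_, ?_, ?_, ?_, ?_⟩ <;> omega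
  · funext i j
    fin_cases i <;> fin_cases j
    · show M 0 0 = (6*(k:ℤ) + a).toNat
      omega
    · show M 0 1 = (6*(k:ℤ) + (-a-b)).toNat
      omega
    · show M 0 2 = (6*(k:ℤ) + b).toNat
      omega
    · show M 1 0 = (6*(k:ℤ) + (-a+b)).toNat
      omega
    · show M 1 1 = (6*(k:ℤ) + 0).toNat
      omega
    · show M 1 2 = (6*(k:ℤ) + (a-b)).toNat
      omega
    · show M 2 0 = (6*(k:ℤ) + (-b)).toNat
      omega
    · show M 2 1 = (6*(k:ℤ) + (a+b)).toNat
      omega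
    · show M 2 2 = (6*(k:ℤ) + (-a)).toNat
      omega


theorem a3_formula_mod18_0 (t : ℕ) (ht : 0 < t) (h : t % 18 = 0) :
    (a3 t : ℚ) = (2 * (t : ℚ) ^ 2 - 32 * (t : ℚ) + 144) / 9 := by
  obtain ⟨k, rfl⟩ : ∃ k, t = 18 * k := ⟨t / 18, by omega⟩
  have hk : 1 ≤ k := by omega
  have hset : {M : Matrix (Fin 3) (Fin 3) ℕ | IsMagicSquare3 (18*k) M}
      = ↑((goodSet (6*(k:ℤ)-1)).image (fun p : ℤ × ℤ => mkM (6*(k:ℤ)) p.1 p.2)) := by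
    ext M
    simp only [Set.mem_setOf_eq, Finset.coe_image, Set.mem_image, Finset.mem_coe]
    constructor
    · intro hM
      obtain ⟨a, b, hmem, rfl⟩ := magic_mk k hk M hM
      exact ⟨(a, b), hmem, rfl⟩
    · rintro ⟨⟨a, b⟩, hmem, rfl⟩
      exact mk_magic k hk a b hmem
  have hinjOn : Set.InjOn (fun p : ℤ × ℤ => mkM (6*(k:ℤ)) p.1 p.2) (goodSet (6*(k:ℤ)-1)) := by
    rintro ⟨a, b⟩ hp ⟨a', b'⟩ hq hEq
    rw [Finset.mem_coe, mem_goodSet] at hp hq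
    simp only at hEq
    have h00 : mkM (6*(k:ℤ)) a b 0 0 = mkM (6*(k:ℤ)) a' b' 0 0 := by rw [hEq]
    have h02 : mkM (6*(k:ℤ)) a b 0 2 = mkM (6*(k:ℤ)) a' b' 0 2 := by rw [hEq]
    change (6*(k:ℤ) + a).toNat = (6*(k:ℤ) + a').toNat at h00
    change (6*(k:ℤ) + b).toNat = (6*(k:ℤ) + b').toNat at h02
    have : a = a' := by omega
    have : b = b' := by omega
    simp_all
  have ha3 : a3 (18*k) = (goodSet (6*(k:ℤ)-1)).card := by
    rw [a3, hset, Set.ncard_coe_finset, Finset.card_image_of_injOn hinjOn]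
  have hq : ((goodSet (6*(k:ℤ)-1)).card : ℚ) = 72*(k:ℚ)^2 - 64*(k:ℚ) + 16 := by
    exact_mod_cast goodCard k hk
  rw [ha3, hq]
  push_cast
  field_simp
  ring

end MagicAux
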